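/- arXiv:1805.03063 — 3 statements merged into one kernel-verified Lean document; each statement's English description precedes it below -/
import Mathlib

section
/- For a radial, nonincreasing, nonnegative function u on ℝ^d and any p > 2, one has ∫_{ℝ^d} (u(x)²/|x|^{d(1-2/p)}) dx ≥ |B^d|^{1-2/p} ‖u‖_p², where B^d is the unit ball in ℝ^d. -/
open MeasureTheory

/-- For a radial, nonincreasing, nonnegative function `u` on `ℝ^d` and `p > 2`,
`∫ u(x)²/|x|^{d(1-2/p)} dx ≥ |B^d|^{1-2/p} ‖u‖_p²`, where `B^d` is the unit
ball in `ℝ^d`. -/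
theorem radial_decreasing_hardy_sobolev
    (d : ℕ) (hd : 1 ≤ d) (p : ℝ) (hp : 2 < p)
    (u : EuclideanSpace ℝ (Fin d) → ℝ)
    (hnonneg : ∀ x, 0 ≤ u x)
    (hradial : ∀ x y, ‖x‖ = ‖y‖ → u x = u y)
    (hmono : ∀ x y, ‖x‖ ≤ ‖y‖ → u y ≤ u x) :
    ∫⁻ x, ENNReal.ofReal ((u x) ^ 2 / ‖x‖ ^ ((d : ℝ) * (1 - 2 / p))) ≥
      (volume (Metric.ball (0 : EuclideanSpace ℝ (Fin d)) 1)) ^ (1 - 2 / p) *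
        (∫⁻ x, ENNReal.ofReal ((u x) ^ p)) ^ ((2 : ℝ) / p) := by
  classical
  haveI : Nonempty (Fin d) := Fin.pos_iff_nonempty.mp hd
  haveI : Nontrivial (EuclideanSpace ℝ (Fin d)) := inferInstance
  have hp0 : (0:ℝ) < p := by linarith
  have hpne : p ≠ 0 := hp0.ne'
  have hp2 : (0:ℝ) < p - 2 := by linarith
  have h2p : (0:ℝ) < 2 / p := by positivity
  have h2p1 : 2 / p < 1 := by rw [div_lt_one hp0]; linarith
  set α : ℝ := (d : ℝ) * (1 - 2 / p) with hαdef
  have hα0 : 0 ≤ α := mul_nonneg (by positivity) (by linarith)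
  set B := volume (Metric.ball (0 : EuclideanSpace ℝ (Fin d)) 1) with hBdef
  set L := ∫⁻ x, ENNReal.ofReal ((u x) ^ 2 / ‖x‖ ^ α) with hLdef
  set I := ∫⁻ x, ENNReal.ofReal ((u x) ^ p) with hIdef
  rw [ge_iff_le]
  by_cases hLtop : L = ⊤
  · rw [hLtop]; exact le_top
  have hB0 : B ≠ 0 := (Metric.measure_ball_pos volume _ one_pos).ne'
  have hBtop : B ≠ ⊤ := measure_ball_lt_top.ne
  have hBt : 0 < B.toReal := ENNReal.toReal_pos hB0 hBtop
  have hfr : Module.finrank ℝ (EuclideanSpace ℝ (Fin d)) = d := finrank_euclideanSpace_fin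
  have hae0 : ∀ᵐ x : EuclideanSpace ℝ (Fin d), x ≠ 0 := by
    rw [ae_iff]
    simp only [not_not, Set.setOf_eq_eq_singleton]
    exact measure_singleton 0
  have key : ∀ x : EuclideanSpace ℝ (Fin d), x ≠ 0 →
      ENNReal.ofReal ((u x) ^ 2 / ‖x‖ ^ α) * (ENNReal.ofReal (‖x‖ ^ d) * B) ≤ L := by
    intro x hx
    have hball : volume (Metric.ball (0 : EuclideanSpace ℝ (Fin d)) ‖x‖)
        = ENNReal.ofReal (‖x‖ ^ d) * B := by
      rw [Measure.addHaar_ball volume (0 : EuclideanSpace ℝ (Fin d)) (norm_nonneg x), hfr]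
    calc ENNReal.ofReal ((u x) ^ 2 / ‖x‖ ^ α) * (ENNReal.ofReal (‖x‖ ^ d) * B)
        = ∫⁻ _ in Metric.ball (0 : EuclideanSpace ℝ (Fin d)) ‖x‖,
            ENNReal.ofReal ((u x) ^ 2 / ‖x‖ ^ α) := by
          rw [setLIntegral_const, hball]
      _ ≤ ∫⁻ y in Metric.ball (0 : EuclideanSpace ℝ (Fin d)) ‖x‖,
            ENNReal.ofReal ((u y) ^ 2 / ‖y‖ ^ α) := by
          apply lintegral_mono_ae
          filter_upwards [ae_restrict_mem measurableSet_ball, ae_restrict_of_ae hae0]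
            with y hy hy0
          apply ENNReal.ofReal_le_ofReal
          have hyx : ‖y‖ ≤ ‖x‖ := le_of_lt (mem_ball_zero_iff.mp hy)
          have hy' : (0:ℝ) < ‖y‖ := norm_pos_iff.mpr hy0
          have hux : u x ≤ u y := hmono y x hyx
          exact div_le_div₀ (pow_nonneg (hnonneg y) 2)
            (pow_le_pow_left₀ (hnonneg x) hux 2)
            (Real.rpow_pos_of_pos hy' α)
            (Real.rpow_le_rpow hy'.le hyx hα0)
      _ ≤ L := by rw [hLdef]; exact setLIntegral_le_lintegral _ _
  set Lt := L.toReal with hLtdef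
  set Bt := B.toReal with hBtdef
  set K := (Lt / Bt) ^ ((p - 2) / 2) with hKdef
  have hLBnn : (0:ℝ) ≤ Lt / Bt := div_nonneg ENNReal.toReal_nonneg hBt.le
  have hK0 : 0 ≤ K := Real.rpow_nonneg hLBnn _
  have hpt : ∀ x : EuclideanSpace ℝ (Fin d), x ≠ 0 →
      (u x) ^ p ≤ K * ((u x) ^ 2 / ‖x‖ ^ α) := by
    intro x hx
    have hr : (0:ℝ) < ‖x‖ := norm_pos_iff.mpr hx
    have hrα : (0:ℝ) < ‖x‖ ^ α := Real.rpow_pos_of_pos hr α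
    have hxd : (0:ℝ) < ‖x‖ ^ d := by positivity
    have hh : 0 ≤ (u x) ^ 2 / ‖x‖ ^ α := div_nonneg (sq_nonneg _) hrα.le
    have h2 : (u x) ^ 2 / ‖x‖ ^ α * (‖x‖ ^ d * Bt) ≤ Lt := by
      rw [← ENNReal.ofReal_le_iff_le_toReal hLtop,
        ENNReal.ofReal_mul hh, ENNReal.ofReal_mul hxd.le, hBtdef,
        ENNReal.ofReal_toReal hBtop]
      exact key x hx
    have h3 : (u x) ^ 2 * (‖x‖ ^ d * Bt) ≤ Lt * ‖x‖ ^ α := by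
      rw [div_mul_eq_mul_div, div_le_iff₀ hrα] at h2
      linarith [h2]
    have hux2 : (u x) ^ 2 ≤ Lt / Bt * ‖x‖ ^ (α - (d:ℝ)) := by
      rw [Real.rpow_sub hr, Real.rpow_natCast, div_mul_div_comm,
        le_div_iff₀ (by positivity : (0:ℝ) < Bt * ‖x‖ ^ d)]
      calc (u x) ^ 2 * (Bt * ‖x‖ ^ d) = (u x) ^ 2 * (‖x‖ ^ d * Bt) := by ring
        _ ≤ Lt * ‖x‖ ^ α := h3
    have hup2 : (u x) ^ (p - 2) ≤ K * ‖x‖ ^ (-α) := by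
      have h4 : (u x) ^ (p - 2) = ((u x) ^ 2) ^ ((p - 2) / 2) := by
        rw [← Real.rpow_natCast (u x) 2, ← Real.rpow_mul (hnonneg x)]
        congr 1
        ring
      rw [h4]
      calc ((u x) ^ 2) ^ ((p - 2) / 2)
          ≤ (Lt / Bt * ‖x‖ ^ (α - (d:ℝ))) ^ ((p - 2) / 2) :=
            Real.rpow_le_rpow (sq_nonneg _) hux2 (by linarith)
        _ = K * (‖x‖ ^ (α - (d:ℝ))) ^ ((p - 2) / 2) :=
            Real.mul_rpow hLBnn (Real.rpow_nonneg hr.le _)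
        _ = K * ‖x‖ ^ (-α) := by
            rw [← Real.rpow_mul hr.le]
            congr 1
            rw [hαdef]
            field_simp
            ring
    rcases eq_or_lt_of_le (hnonneg x) with h0 | h0
    · rw [← h0, Real.zero_rpow hpne]
      simp
    · have hsplit : (u x) ^ p = (u x) ^ 2 * (u x) ^ (p - 2) := by
        rw [← Real.rpow_natCast (u x) 2, ← Real.rpow_add h0]
        norm_num
      rw [hsplit]
      calc (u x) ^ 2 * (u x) ^ (p - 2) ≤ (u x) ^ 2 * (K * ‖x‖ ^ (-α)) :=
            mul_le_mul_of_nonneg_left hup2 (sq_nonneg _)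
        _ = K * ((u x) ^ 2 / ‖x‖ ^ α) := by
            rw [Real.rpow_neg hr.le]
            ring
  have hI : I ≤ ENNReal.ofReal K * L := by
    rw [hIdef, hLdef, ← lintegral_const_mul' _ _ ENNReal.ofReal_ne_top]
    apply lintegral_mono_ae
    filter_upwards [hae0] with x hx
    calc ENNReal.ofReal ((u x) ^ p)
        ≤ ENNReal.ofReal (K * ((u x) ^ 2 / ‖x‖ ^ α)) :=
          ENNReal.ofReal_le_ofReal (hpt x hx)
      _ = ENNReal.ofReal K * ENNReal.ofReal ((u x) ^ 2 / ‖x‖ ^ α) :=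
          ENNReal.ofReal_mul hK0
  by_cases hL0 : L = 0
  · have hI0 : I = 0 := by
      rw [hL0, mul_zero] at hI
      exact le_antisymm hI zero_le
    rw [hI0, ENNReal.zero_rpow_of_pos h2p, mul_zero]
    exact zero_le
  have hofK : ENNReal.ofReal K = (L / B) ^ ((p - 2) / 2) := by
    rw [hKdef, ← ENNReal.ofReal_rpow_of_nonneg hLBnn (by linarith : (0:ℝ) ≤ (p-2)/2)]
    congr 1
    rw [hLtdef, hBtdef, ENNReal.ofReal_div_of_pos hBt, ENNReal.ofReal_toReal hLtop,
      ENNReal.ofReal_toReal hBtop]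
  have hstep : I ^ ((2:ℝ) / p) ≤ L / B ^ (1 - 2 / p) := by
    have h5 : I ≤ (L / B) ^ ((p - 2) / 2) * L := by rw [← hofK]; exact hI
    calc I ^ ((2:ℝ) / p) ≤ ((L / B) ^ ((p - 2) / 2) * L) ^ ((2:ℝ) / p) :=
          ENNReal.rpow_le_rpow h5 h2p.le
      _ = (L / B) ^ ((p - 2) / 2 * (2 / p)) * L ^ ((2:ℝ) / p) := by
          rw [ENNReal.mul_rpow_of_nonneg _ _ h2p.le, ← ENNReal.rpow_mul]
      _ = (L ^ (1 - 2 / p) / B ^ (1 - 2 / p)) * L ^ ((2:ℝ) / p) := by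
          have he : (p - 2) / 2 * (2 / p) = 1 - 2 / p := by field_simp
          rw [he, ENNReal.div_rpow_of_nonneg _ _ (by linarith : (0:ℝ) ≤ 1 - 2/p)]
      _ = L / B ^ (1 - 2 / p) := by
          rw [div_eq_mul_inv, mul_right_comm, ← ENNReal.rpow_add _ _ hL0 hLtop,
            ← div_eq_mul_inv]
          have he2 : (1 - 2 / p) + 2 / p = 1 := by ring
          rw [he2, ENNReal.rpow_one]
  calc B ^ (1 - 2 / p) * I ^ ((2:ℝ) / p)
      ≤ B ^ (1 - 2 / p) * (L / B ^ (1 - 2 / p)) := mul_le_mul_right hstep _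
    _ = L := ENNReal.mul_div_cancel
        (ENNReal.rpow_pos (hB0.bot_lt) hBtop).ne'
        (ENNReal.rpow_ne_top_of_nonneg (by linarith) hBtop)
end

section
/- Let β₀ ∈ ℝ and let u ∈ H¹([0,π]) satisfy the boundary condition u(π) = e^{iπβ₀} u(0). If |β₀| ≤ 1 then ∫_0^π |u'|² ≥ β₀² ∫_0^π |u|². -/
open MeasureTheory Set AddCircle intervalIntegral
open scoped ENNReal

lemma parseval_on {a b : ℝ} (hab : a < b) (f : ℝ → ℂ) (hf : ContinuousOn f (Set.Icc a b)) :
    Summable (fun n : ℤ => ‖fourierCoeffOn hab f n‖ ^ 2) ∧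
    (∫ x in a..b, ‖f x‖ ^ 2) = (b - a) * ∑' n : ℤ, ‖fourierCoeffOn hab f n‖ ^ 2 := by
  haveI hT : Fact (0 < b - a) := ⟨by linarith⟩
  set F : AddCircle (b - a) → ℂ := liftIoc (b - a) a f with hFdef
  have hba : a + (b - a) = b := by ring
  have hsub : Ioc a (a + (b - a)) ⊆ Icc a b := by
    rw [hba]; exact Ioc_subset_Icc_self
  have hcoef : ∀ n : ℤ, fourierCoeffOn hab f n = fourierCoeff F n := fun n => rfl
  have hFmeas : Measurable F := by
    have h1 : Continuous ((Ioc a (a + (b - a))).restrict f) :=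
      continuousOn_iff_continuous_restrict.mp (hf.mono hsub)
    exact h1.measurable.comp (measurableEquivIoc (b - a) a).measurable
  obtain ⟨C, hC⟩ := (isCompact_Icc).exists_bound_of_continuousOn hf
  have hFbd : ∀ z, ‖F z‖ ≤ C := by
    intro z
    have : F z = f ((equivIoc (b - a) a z : ℝ)) := rfl
    rw [this]
    exact hC _ (hsub (equivIoc (b - a) a z).2)
  have hF2 : MemLp F 2 haarAddCircle :=
    MemLp.of_bound hFmeas.aestronglyMeasurable C (Filter.Eventually.of_forall hFbd)
  set G := hF2.toLp F with hGdef
  have hGF : ⇑G =ᵐ[haarAddCircle] F := hF2.coeFn_toLp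
  have hcoefG : ∀ n : ℤ, fourierCoeff (⇑G) n = fourierCoeff F n := by
    intro n
    apply MeasureTheory.integral_congr_ae
    exact hGF.mono fun x hx => by simp only [hx]
  have hint : ∫ t : AddCircle (b - a), ‖F t‖ ^ 2 ∂haarAddCircle
      = (∫ x in a..b, ‖f x‖ ^ 2) / (b - a) := by
    have h2 : (∫ x in a..a + (b - a), ‖F ↑x‖ ^ 2)
        = ∫ t : AddCircle (b - a), ‖F t‖ ^ 2 :=
      AddCircle.intervalIntegral_preimage (b - a) a (fun z => ‖F z‖ ^ 2)
    have h3 : (∫ x in a..a + (b - a), ‖F ↑x‖ ^ 2) = ∫ x in a..b, ‖f x‖ ^ 2 := by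
      rw [hba, intervalIntegral.integral_of_le hab.le, intervalIntegral.integral_of_le hab.le]
      refine setIntegral_congr_fun measurableSet_Ioc fun x hx => ?_
      have hx' : x ∈ Ioc a (a + (b - a)) := by rwa [hba]
      rw [show F ↑x = f x from liftIoc_coe_apply hx']
    have h4 : ∫ t : AddCircle (b - a), ‖F t‖ ^ 2
        = (b - a) * ∫ t : AddCircle (b - a), ‖F t‖ ^ 2 ∂haarAddCircle := by
      rw [volume_eq_smul_haarAddCircle, MeasureTheory.integral_smul_measure,
        ENNReal.toReal_ofReal hT.out.le, smul_eq_mul]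
    have h5 := h3.symm.trans (h2.trans h4)
    rw [eq_div_iff hT.out.ne']
    linarith
  have hParse : (∑' n : ℤ, ‖fourierCoeffOn hab f n‖ ^ 2)
      = (∫ x in a..b, ‖f x‖ ^ 2) / (b - a) :=
    calc (∑' n : ℤ, ‖fourierCoeffOn hab f n‖ ^ 2)
        = ∑' n : ℤ, ‖fourierCoeff (⇑G) n‖ ^ 2 := by
          congr 1; ext n; rw [hcoefG, hcoef]
      _ = ∫ t : AddCircle (b - a), ‖G t‖ ^ 2 ∂haarAddCircle := tsum_sq_fourierCoeff G
      _ = ∫ t : AddCircle (b - a), ‖F t‖ ^ 2 ∂haarAddCircle :=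
          MeasureTheory.integral_congr_ae (hGF.mono fun x hx => by simp only [hx])
      _ = (∫ x in a..b, ‖f x‖ ^ 2) / (b - a) := hint
  constructor
  · have hs : Summable (fun n : ℤ => ‖fourierBasis.repr G n‖ ^ ((2 : ℝ≥0∞)).toReal) :=
      (memℓp_gen_iff (by norm_num)).mp (lp.memℓp (fourierBasis.repr G))
    have h5 : Summable (fun n : ℤ => ‖fourierCoeff (⇑G) n‖ ^ 2) := by
      simpa [fourierBasis_repr, Real.rpow_natCast] using hs
    refine h5.congr fun n => ?_
    rw [hcoefG, hcoef]
  · rw [hParse, mul_comm, div_mul_cancel₀ _ hT.out.ne']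

lemma fourierCoeffOn_add' {a b : ℝ} (hab : a < b) {f g : ℝ → ℂ}
    (hf : IntervalIntegrable f volume a b) (hg : IntervalIntegrable g volume a b) (n : ℤ) :
    fourierCoeffOn hab (fun x => f x + g x) n
      = fourierCoeffOn hab f n + fourierCoeffOn hab g n := by
  have hfc : IntervalIntegrable (fun x : ℝ => fourier (-n) (x : AddCircle (b - a)) * f x)
      volume a b :=
    hf.continuousOn_mul ((map_continuous (fourier (-n))).comp
      (AddCircle.continuous_mk' _)).continuousOn
  have hgc : IntervalIntegrable (fun x : ℝ => fourier (-n) (x : AddCircle (b - a)) * g x)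
      volume a b :=
    hg.continuousOn_mul ((map_continuous (fourier (-n))).comp
      (AddCircle.continuous_mk' _)).continuousOn
  simp_rw [fourierCoeffOn_eq_integral, smul_eq_mul, mul_add]
  rw [intervalIntegral.integral_add hfc hgc, smul_add]

/-- **Poincaré inequality with twisted (semi-periodic) boundary conditions**:
if `u ∈ H¹([0,π]; ℂ)` satisfies `u(π) = e^{iπβ₀} u(0)` and `|β₀| ≤ 1`, then
`∫_0^π |u'|² ≥ β₀² ∫_0^π |u|²`. -/
theorem poincare_twisted_halfcircle (β₀ : ℝ) (hβ : |β₀| ≤ 1)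
    (u u' : ℝ → ℂ)
    (hu : ∀ x ∈ Set.Icc (0 : ℝ) Real.pi, HasDerivAt u (u' x) x)
    (hu' : ContinuousOn u' (Set.Icc 0 Real.pi))
    (hbc : u Real.pi = Complex.exp ((Real.pi * β₀ : ℝ) * Complex.I) * u 0) :
    ∫ x in (0 : ℝ)..Real.pi, ‖u' x‖ ^ 2 ≥
      β₀ ^ 2 * ∫ x in (0 : ℝ)..Real.pi, ‖u x‖ ^ 2 := by
  have hpi : (0 : ℝ) < Real.pi := Real.pi_pos
  set c : ℂ := -(β₀ : ℂ) * Complex.I with hc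
  set v : ℝ → ℂ := fun x => Complex.exp (c * x) * u x with hv
  set g : ℝ → ℂ := fun x => Complex.exp (c * x) * u' x with hg
  set w : ℝ → ℂ := fun x => g x + c * v x with hw
  have hnorm : ∀ x : ℝ, ‖Complex.exp (c * x)‖ = 1 := by
    intro x
    have h1 : c * x = ((-(β₀ * x) : ℝ) : ℂ) * Complex.I := by push_cast [hc]; ring
    rw [h1, Complex.norm_exp_ofReal_mul_I]
  have hucont : ContinuousOn u (Set.Icc 0 Real.pi) :=
    fun x hx => (hu x hx).continuousAt.continuousWithinAt
  have hecont : Continuous fun x : ℝ => Complex.exp (c * x) :=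
    Complex.continuous_exp.comp (continuous_const.mul Complex.continuous_ofReal)
  have hvcont : ContinuousOn v (Set.Icc 0 Real.pi) := hecont.continuousOn.mul hucont
  have hgcont : ContinuousOn g (Set.Icc 0 Real.pi) := hecont.continuousOn.mul hu'
  have hwcont : ContinuousOn w (Set.Icc 0 Real.pi) :=
    hgcont.add (continuousOn_const.mul hvcont)
  have huIcc : Set.uIcc (0 : ℝ) Real.pi = Set.Icc 0 Real.pi := uIcc_of_le hpi.le
  have hvder : ∀ x ∈ Set.Icc (0 : ℝ) Real.pi, HasDerivAt v (w x) x := by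
    intro x hx
    have he : HasDerivAt (fun y : ℝ => Complex.exp (c * y)) (c * Complex.exp (c * x)) x := by
      have h1 : HasDerivAt (fun z : ℂ => Complex.exp (c * z)) (Complex.exp (c * x) * c)
          (x : ℂ) := by
        simpa using ((hasDerivAt_id (x : ℂ)).const_mul c).cexp
      simpa [mul_comm] using h1.comp_ofReal
    have h2 := he.mul (hu x hx)
    convert h2 using 1
    show Complex.exp (c * x) * u' x + c * (Complex.exp (c * x) * u x) = _
    ring
    all_goals rfl
  have hv0 : v Real.pi = v 0 := by
    show Complex.exp (c * Real.pi) * u Real.pi = Complex.exp (c * (0 : ℝ)) * u 0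
    rw [hbc, ← mul_assoc, ← Complex.exp_add]
    congr 2
    push_cast [hc]
    ring
  have hwint : IntervalIntegrable w volume 0 Real.pi :=
    (huIcc ▸ hwcont : ContinuousOn w (Set.uIcc 0 Real.pi)).intervalIntegrable
  have hgint : IntervalIntegrable g volume 0 Real.pi :=
    (huIcc ▸ hgcont : ContinuousOn g (Set.uIcc 0 Real.pi)).intervalIntegrable
  have hvint : IntervalIntegrable v volume 0 Real.pi :=
    (huIcc ▸ hvcont : ContinuousOn v (Set.uIcc 0 Real.pi)).intervalIntegrable
  have hftc : (∫ x in (0:ℝ)..Real.pi, w x) = 0 := by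
    have h3 := intervalIntegral.integral_eq_sub_of_hasDerivAt
      (fun x hx => hvder x (huIcc ▸ hx)) hwint
    rw [h3, hv0, sub_self]
  -- coefficient of w at 0 vanishes
  have hw0 : fourierCoeffOn hpi w 0 = 0 := by
    rw [fourierCoeffOn_eq_integral]
    simp only [neg_zero, fourier_zero, one_smul]
    rw [hftc, smul_zero]
  -- splitting
  have hsplit : ∀ n : ℤ, fourierCoeffOn hpi w n
      = fourierCoeffOn hpi g n + c * fourierCoeffOn hpi v n := by
    intro n
    have h4 : IntervalIntegrable (fun x => c * v x) volume 0 Real.pi :=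
      hvint.const_mul c
    have h5 := fourierCoeffOn_add' hpi hgint h4 n
    rw [show (fun x => g x + c * v x) = w from rfl] at h5
    rw [h5, fourierCoeffOn.const_mul]
  -- derivative relation
  have hderiv : ∀ n : ℤ, n ≠ 0 →
      fourierCoeffOn hpi w n = 2 * Complex.I * n * fourierCoeffOn hpi v n := by
    intro n hn
    have h6 := fourierCoeffOn_of_hasDerivAt hpi hn
      (fun x hx => hvder x (huIcc ▸ hx)) hwint
    rw [hv0, sub_self, mul_zero, zero_sub] at h6
    have hπ : ((Real.pi : ℂ)) ≠ 0 := by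
      simpa using Real.pi_ne_zero
    have hnC : (n : ℂ) ≠ 0 := Int.cast_ne_zero.mpr hn
    have hI : Complex.I ≠ 0 := Complex.I_ne_zero
    field_simp at h6
    simp only [Complex.ofReal_zero, sub_zero] at h6
    have h7 : (Real.pi : ℂ) * fourierCoeffOn hpi w n
        = (Real.pi : ℂ) * (2 * Complex.I * n * fourierCoeffOn hpi v n) := by
      linear_combination -h6
    exact mul_left_cancel₀ hπ h7
  -- the key relation
  have hkey : ∀ n : ℤ, fourierCoeffOn hpi g n
      = Complex.I * (2 * n + β₀) * fourierCoeffOn hpi v n := by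
    intro n
    rcases eq_or_ne n 0 with rfl | hn
    · have := hsplit 0
      rw [hw0] at this
      have h7 : fourierCoeffOn hpi g 0 = -c * fourierCoeffOn hpi v 0 := by
        linear_combination -this
      rw [h7, hc]
      push_cast
      ring
    · have h8 := hsplit n
      rw [hderiv n hn] at h8
      have h9 : fourierCoeffOn hpi g n
          = 2 * Complex.I * n * fourierCoeffOn hpi v n - c * fourierCoeffOn hpi v n := by
        linear_combination -h8
      rw [h9, hc]
      push_cast
      ring
  -- norms
  have hnormeq : ∀ n : ℤ, ‖fourierCoeffOn hpi g n‖ ^ 2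
      = (2 * n + β₀) ^ 2 * ‖fourierCoeffOn hpi v n‖ ^ 2 := by
    intro n
    rw [hkey n, norm_mul]
    have h10 : (Complex.I * (2 * (n : ℂ) + (β₀ : ℂ))) = Complex.I * (((2 * n + β₀ : ℝ)) : ℂ) := by
      push_cast; ring
    rw [h10, norm_mul, Complex.norm_I, one_mul,
      Complex.norm_real, Real.norm_eq_abs, mul_pow, sq_abs]
  have htw : ∀ n : ℤ, β₀ ^ 2 ≤ (2 * (n : ℝ) + β₀) ^ 2 := by
    intro n
    have h1 := abs_le.mp hβ
    rcases lt_trichotomy n 0 with h | h | h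
    · have h2' : n ≤ -1 := by omega
      have h2 : (n : ℝ) ≤ -1 := by exact_mod_cast h2'
      nlinarith
    · simp [h]
    · have h2' : 1 ≤ n := by omega
      have h2 : (1 : ℝ) ≤ (n : ℝ) := by exact_mod_cast h2'
      nlinarith
  obtain ⟨hsumv, hintv⟩ := parseval_on hpi v hvcont
  obtain ⟨hsumg, hintg⟩ := parseval_on hpi g hgcont
  have hle : β₀ ^ 2 * ∑' n : ℤ, ‖fourierCoeffOn hpi v n‖ ^ 2
      ≤ ∑' n : ℤ, ‖fourierCoeffOn hpi g n‖ ^ 2 := by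
    rw [← tsum_mul_left]
    refine Summable.tsum_le_tsum (fun n => ?_) (hsumv.mul_left _) hsumg
    rw [hnormeq n]
    exact mul_le_mul_of_nonneg_right (htw n) (sq_nonneg _)
  have hIu' : (∫ x in (0:ℝ)..Real.pi, ‖u' x‖ ^ 2) = ∫ x in (0:ℝ)..Real.pi, ‖g x‖ ^ 2 := by
    refine intervalIntegral.integral_congr fun x _ => ?_
    simp only [hg, norm_mul, hnorm, one_mul]
  have hIu : (∫ x in (0:ℝ)..Real.pi, ‖u x‖ ^ 2) = ∫ x in (0:ℝ)..Real.pi, ‖v x‖ ^ 2 := by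
    refine intervalIntegral.integral_congr fun x _ => ?_
    simp only [hv, norm_mul, hnorm, one_mul]
  rw [ge_iff_le, hIu', hIu, hintv, hintg]
  have hπ0 : (0:ℝ) < Real.pi - 0 := by linarith
  nlinarith [hle]
end

section
/- Let Q₀ ⊆ ℝ^d be a cube, Λ > 0, and 0 ≤ f ∈ L¹(Q₀) with ∫_{Q₀} f ≥ Λ. Then Q₀ can be partitioned into countably many disjoint sub-cubes Q such that ∫_Q f ≤ Λ for each Q, and for all α, β > 0 and γ ≥ 0: ∑_Q |Q|^{-α} [ (∫_Q f)^β − (Λ^{β−γ}/C_{d,α,β}) (∫_Q f)^γ ] ≥ 0, with C_{d,α,β} = 2^{d(α+β+1)}/(2^{dα} − 1). -/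
open MeasureTheory

/-- A half-open `d`-cube in `ℝ^d` with lower corner `c` and side length `ℓ`. -/
def halfOpenCube {d : ℕ} (c : EuclideanSpace ℝ (Fin d)) (ℓ : ℝ) :
    Set (EuclideanSpace ℝ (Fin d)) :=
  {x | ∀ m, x m ∈ Set.Ico (c m) (c m + ℓ)}

noncomputable def Cst (d : ℕ) (α β : ℝ) : ℝ :=
  (2:ℝ) ^ ((d:ℝ) * (α + β + 1)) / ((2:ℝ) ^ ((d:ℝ) * α) - 1)

lemma one_lt_A {d : ℕ} (hd : 1 ≤ d) {α : ℝ} (hα : 0 < α) : 1 < (2:ℝ) ^ ((d:ℝ) * α) := by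
  have h : (0:ℝ) < (d:ℝ) * α := by
    have h1 : (1:ℝ) ≤ (d:ℝ) := by exact_mod_cast hd
    positivity
  calc (1:ℝ) = (2:ℝ) ^ (0:ℝ) := by simp
  _ < (2:ℝ) ^ ((d:ℝ) * α) := Real.rpow_lt_rpow_of_exponent_lt one_lt_two h

lemma Cst_pos {d : ℕ} (hd : 1 ≤ d) {α β : ℝ} (hα : 0 < α) (hβ : 0 < β) :
    0 < Cst d α β := by
  have hA := one_lt_A hd hα
  have : (0:ℝ) < (2:ℝ) ^ ((d:ℝ) * (α + β + 1)) := by positivity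
  exact div_pos this (by linarith)

lemma Cst_identity {d : ℕ} (hd : 1 ≤ d) {α β : ℝ} (hα : 0 < α) (hβ : 0 < β) :
    (2:ℝ) ^ ((d:ℝ) * α) * (((2:ℝ) ^ ((d:ℝ) * β))⁻¹ -
      (2:ℝ) ^ (d : ℕ) / Cst d α β) = ((2:ℝ) ^ ((d:ℝ) * β))⁻¹ := by
  have hA : 1 < (2:ℝ) ^ ((d:ℝ) * α) := one_lt_A hd hα
  have hB : (0:ℝ) < (2:ℝ) ^ ((d:ℝ) * β) := by positivity
  have hnum : (2:ℝ) ^ ((d:ℝ) * (α + β + 1)) =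
      (2:ℝ) ^ ((d:ℝ) * α) * (2:ℝ) ^ ((d:ℝ) * β) * (2:ℝ) ^ (d:ℕ) := by
    rw [mul_add, mul_add, mul_one, Real.rpow_add two_pos, Real.rpow_add two_pos,
      Real.rpow_natCast]
  rw [Cst, hnum]
  have h1 : (2:ℝ) ^ ((d:ℝ) * α) - 1 ≠ 0 := by linarith
  have h2 : ((2:ℝ) ^ ((d:ℝ) * β)) ≠ 0 := ne_of_gt hB
  have h3 : (0:ℝ) < (2:ℝ) ^ (d:ℕ) := by positivity
  field_simp
  ring

lemma wchild {d : ℕ} {ℓ : ℝ} (hp : 0 < ℓ) {α : ℝ} :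
    ((ℓ / 2) ^ d) ^ (-α) = (2:ℝ) ^ ((d:ℝ) * α) * (ℓ ^ d) ^ (-α) := by
  have e3 : ((2:ℝ) ^ (d:ℕ)) ^ (-α) = ((2:ℝ) ^ ((d:ℝ) * α))⁻¹ := by
    rw [← Real.rpow_natCast 2 d, ← Real.rpow_mul (by norm_num), mul_neg,
      Real.rpow_neg (by norm_num)]
  rw [div_pow, Real.div_rpow (by positivity) (by positivity), e3, div_inv_eq_mul, mul_comm]

lemma lam_div_pow {d : ℕ} {Λ : ℝ} (hΛ : 0 < Λ) {β : ℝ} :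
    (Λ / 2 ^ (d:ℕ)) ^ β = Λ ^ β * ((2:ℝ) ^ ((d:ℝ) * β))⁻¹ := by
  have e3 : ((2:ℝ) ^ (d:ℕ)) ^ β = (2:ℝ) ^ ((d:ℝ) * β) := by
    rw [← Real.rpow_natCast 2 d, ← Real.rpow_mul (by norm_num)]
  rw [Real.div_rpow hΛ.le (by positivity), e3, div_eq_mul_inv]

namespace CL
variable {d : ℕ}

lemma measurableSet_cube (c : EuclideanSpace ℝ (Fin d)) (ℓ : ℝ) :
    MeasurableSet (halfOpenCube c ℓ) := by
  have : halfOpenCube c ℓ =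
      ⋂ m, (fun x : EuclideanSpace ℝ (Fin d) => x m) ⁻¹' Set.Ico (c m) (c m + ℓ) := by
    ext x; simp [halfOpenCube, Set.mem_iInter]
  rw [this]
  exact MeasurableSet.iInter fun m => ((measurable_pi_apply m).comp (WithLp.measurable_ofLp 2 _)) measurableSet_Ico

lemma volume_cube (c : EuclideanSpace ℝ (Fin d)) {ℓ : ℝ} (h : 0 ≤ ℓ) :
    volume (halfOpenCube c ℓ) = ENNReal.ofReal (ℓ ^ d) := by
  have hpre : halfOpenCube c ℓ =
      (MeasurableEquiv.toLp 2 (Fin d → ℝ)).symm ⁻¹'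
        (Set.univ.pi fun m => Set.Ico (c m) (c m + ℓ)) := by
    ext x; simp [halfOpenCube, Set.mem_pi, MeasurableEquiv.toLp_symm_apply]
  rw [hpre, (EuclideanSpace.volume_preserving_symm_measurableEquiv_toLp (Fin d)).measure_preimage
      ((MeasurableSet.univ_pi fun m => measurableSet_Ico).nullMeasurableSet)]
  rw [volume_pi_pi]
  simp [Real.volume_Ico, ← ENNReal.ofReal_pow h]

noncomputable def childCorner (c : EuclideanSpace ℝ (Fin d)) (ℓ : ℝ) (ε : Fin d → Bool) :
    EuclideanSpace ℝ (Fin d) := WithLp.toLp 2 (fun m => c m + (if ε m then ℓ / 2 else 0))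

lemma child_subset (c : EuclideanSpace ℝ (Fin d)) {ℓ : ℝ} (hℓ : 0 < ℓ) (ε : Fin d → Bool) :
    halfOpenCube (childCorner c ℓ ε) (ℓ / 2) ⊆ halfOpenCube c ℓ := by
  intro x hx m
  have h := hx m
  simp only [childCorner, PiLp.toLp_apply, Set.mem_Ico] at h ⊢
  constructor
  · rcases h with ⟨h1, _⟩
    refine le_trans ?_ h1
    split <;> linarith
  · rcases h with ⟨_, h2⟩
    refine lt_of_lt_of_le h2 ?_
    split <;> linarith

lemma iUnion_child (c : EuclideanSpace ℝ (Fin d)) {ℓ : ℝ} (hℓ : 0 < ℓ) :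
    ⋃ ε : Fin d → Bool, halfOpenCube (childCorner c ℓ ε) (ℓ / 2) = halfOpenCube c ℓ := by
  apply Set.Subset.antisymm
  · exact Set.iUnion_subset fun ε => child_subset c hℓ ε
  · intro x hx
    refine Set.mem_iUnion.2 ⟨fun m => decide (c m + ℓ / 2 ≤ x m), fun m => ?_⟩
    have h := hx m
    simp only [childCorner, PiLp.toLp_apply, Set.mem_Ico, decide_eq_true_eq] at h ⊢
    by_cases hc : c m + ℓ / 2 ≤ x m
    · simp only [if_pos hc]
      exact ⟨by linarith, by rcases h with ⟨_, h2⟩; linarith⟩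
    · simp only [if_neg hc]
      push_neg at hc
      rcases h with ⟨h1, _⟩
      exact ⟨by linarith, by linarith⟩

lemma disjoint_child (c : EuclideanSpace ℝ (Fin d)) (ℓ : ℝ)
    {ε ε' : Fin d → Bool} (h : ε ≠ ε') :
    Disjoint (halfOpenCube (childCorner c ℓ ε) (ℓ / 2))
      (halfOpenCube (childCorner c ℓ ε') (ℓ / 2)) := by
  rw [Set.disjoint_left]
  intro x hx hx'
  obtain ⟨m, hm⟩ := Function.ne_iff.1 h
  have h1 := hx m; have h2 := hx' m
  simp only [childCorner, PiLp.toLp_apply, Set.mem_Ico] at h1 h2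
  rcases Bool.eq_false_or_eq_true (ε m) with he | he <;>
    rcases Bool.eq_false_or_eq_true (ε' m) with he' | he' <;>
      simp [he, he'] at hm h1 h2 <;> linarith

variable (g : EuclideanSpace ℝ (Fin d) → ℝ) (Λ : ℝ)

/-- The integral of `g` over the cube encoded by `p`. -/
noncomputable def mass (p : EuclideanSpace ℝ (Fin d) × ℝ) : ℝ :=
  ∫ x in halfOpenCube p.1 p.2, g x

/-- The `2^d` children of a cube. -/
noncomputable def kids (p : EuclideanSpace ℝ (Fin d) × ℝ) :
    List (EuclideanSpace ℝ (Fin d) × ℝ) :=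
  (Finset.univ : Finset (Fin d → Bool)).toList.map fun ε => (childCorner p.1 p.2 ε, p.2 / 2)

/-- Recursive dyadic subdivision with fuel. -/
noncomputable def subdiv : ℕ → EuclideanSpace ℝ (Fin d) × ℝ →
    List (EuclideanSpace ℝ (Fin d) × ℝ)
  | 0, p => [p]
  | k + 1, p => if mass g p ≤ Λ then [p] else (kids p).flatMap (subdiv k)

lemma subdiv_succ (k : ℕ) (p : EuclideanSpace ℝ (Fin d) × ℝ) :
    subdiv g Λ (k + 1) p =
      if mass g p ≤ Λ then [p] else (kids p).flatMap (subdiv g Λ k) := by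
  rw [subdiv]

lemma subdiv_of_le {k : ℕ} {p : EuclideanSpace ℝ (Fin d) × ℝ} (h : mass g p ≤ Λ) :
    subdiv g Λ k p = [p] := by
  cases k with
  | zero => rfl
  | succ k => rw [subdiv_succ, if_pos h]

lemma mem_kids {p q : EuclideanSpace ℝ (Fin d) × ℝ} :
    q ∈ kids p ↔ ∃ ε : Fin d → Bool, q = (childCorner p.1 p.2 ε, p.2 / 2) := by
  simp [kids, Finset.mem_toList, eq_comm]

lemma mass_nonneg (hg0 : ∀ x, 0 ≤ g x) (p : EuclideanSpace ℝ (Fin d) × ℝ) :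
    0 ≤ mass g p :=
  setIntegral_nonneg (measurableSet_cube p.1 p.2) fun x _ => hg0 x

lemma mass_eq_sum_kids (hg : Integrable g) {p : EuclideanSpace ℝ (Fin d) × ℝ}
    (hp : 0 < p.2) :
    mass g p = ∑ ε : Fin d → Bool, mass g (childCorner p.1 p.2 ε, p.2 / 2) := by
  have h1 : mass g p = ∫ x in ⋃ ε : Fin d → Bool,
      halfOpenCube (childCorner p.1 p.2 ε) (p.2 / 2), g x := by
    rw [mass, ← iUnion_child p.1 hp]
  rw [h1, integral_iUnion (fun ε => measurableSet_cube _ _)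
      (fun ε ε' hne => disjoint_child p.1 p.2 hne) hg.integrableOn]
  rw [tsum_fintype]
  rfl

lemma subdiv_side (k : ℕ) : ∀ {p q : EuclideanSpace ℝ (Fin d) × ℝ},
    q ∈ subdiv g Λ k p → 0 < p.2 →
    0 < q.2 ∧ halfOpenCube q.1 q.2 ⊆ halfOpenCube p.1 p.2 := by
  induction k with
  | zero =>
    intro p q hq hp
    simp only [subdiv, List.mem_singleton] at hq
    subst hq; exact ⟨hp, subset_rfl⟩
  | succ k ih =>
    intro p q hq hp
    rw [subdiv_succ] at hq
    by_cases h : mass g p ≤ Λ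
    · rw [if_pos h, List.mem_singleton] at hq
      subst hq; exact ⟨hp, subset_rfl⟩
    · rw [if_neg h, List.mem_flatMap] at hq
      obtain ⟨a, ha, hqa⟩ := hq
      obtain ⟨ε, rfl⟩ := mem_kids.1 ha
      have h2 : (0:ℝ) < p.2 / 2 := by linarith
      obtain ⟨hq2, hsub⟩ := ih hqa h2
      exact ⟨hq2, hsub.trans (child_subset p.1 hp ε)⟩

lemma subdiv_mass_le {s₀ : ℝ}
    (Hδ : ∀ (c : EuclideanSpace ℝ (Fin d)) (ℓ : ℝ), 0 < ℓ → ℓ ≤ s₀ → mass g (c, ℓ) ≤ Λ)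
    (k : ℕ) : ∀ {p q : EuclideanSpace ℝ (Fin d) × ℝ},
    q ∈ subdiv g Λ k p → 0 < p.2 → p.2 ≤ s₀ * 2 ^ k → mass g q ≤ Λ := by
  induction k with
  | zero =>
    intro p q hq hp hps
    simp only [subdiv, List.mem_singleton] at hq
    subst hq
    exact Hδ _ _ hp (by simpa using hps)
  | succ k ih =>
    intro p q hq hp hps
    rw [subdiv_succ] at hq
    by_cases h : mass g p ≤ Λ
    · rw [if_pos h, List.mem_singleton] at hq; subst hq; exact h
    · rw [if_neg h, List.mem_flatMap] at hq
      obtain ⟨a, ha, hqa⟩ := hq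
      obtain ⟨ε, rfl⟩ := mem_kids.1 ha
      refine ih hqa (by simpa using half_pos hp) ?_
      have h2 : (2:ℝ) ^ (k + 1) = 2 * 2 ^ k := by ring
      rw [h2] at hps
      simp only []
      linarith

lemma subdiv_pairwise (k : ℕ) : ∀ {p : EuclideanSpace ℝ (Fin d) × ℝ}, 0 < p.2 →
    (subdiv g Λ k p).Pairwise
      (fun q q' => Disjoint (halfOpenCube q.1 q.2) (halfOpenCube q'.1 q'.2)) := by
  induction k with
  | zero => intro p _; simp [subdiv]
  | succ k ih =>
    intro p hp
    rw [subdiv_succ]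
    by_cases h : mass g p ≤ Λ
    · rw [if_pos h]; simp
    · rw [if_neg h, List.flatMap_def, List.pairwise_flatten]
      have h2 : (0:ℝ) < p.2 / 2 := by linarith
      constructor
      · intro l hl
        rw [List.mem_map] at hl
        obtain ⟨a, ha, rfl⟩ := hl
        obtain ⟨ε, rfl⟩ := mem_kids.1 ha
        exact ih h2
      · rw [List.pairwise_map, kids, List.pairwise_map]
        refine List.Pairwise.imp ?_
          ((Finset.nodup_toList _).pairwise_of_forall_ne fun ε _ ε' _ hne => hne)
        intro ε ε' hne q hq q' hq'
        have hs1 := (subdiv_side g Λ k hq (by simpa using h2)).2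
        have hs2 := (subdiv_side g Λ k hq' (by simpa using h2)).2
        exact (disjoint_child p.1 p.2 hne).mono hs1 hs2

lemma subdiv_iUnion (k : ℕ) : ∀ {p : EuclideanSpace ℝ (Fin d) × ℝ}, 0 < p.2 →
    ⋃ q ∈ subdiv g Λ k p, halfOpenCube q.1 q.2 = halfOpenCube p.1 p.2 := by
  induction k with
  | zero => intro p _; simp [subdiv]
  | succ k ih =>
    intro p hp
    rw [subdiv_succ]
    by_cases h : mass g p ≤ Λ
    · rw [if_pos h]; simp
    · rw [if_neg h]
      have h2 : (0:ℝ) < p.2 / 2 := by linarith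
      calc ⋃ q ∈ (kids p).flatMap (subdiv g Λ k), halfOpenCube q.1 q.2
          = ⋃ a ∈ kids p, ⋃ q ∈ subdiv g Λ k a, halfOpenCube q.1 q.2 := by
            ext x
            simp only [Set.mem_iUnion, List.mem_flatMap]
            tauto
        _ = ⋃ a ∈ kids p, halfOpenCube a.1 a.2 := by
            refine Set.iUnion₂_congr fun a ha => ?_
            obtain ⟨ε, rfl⟩ := mem_kids.1 ha
            exact ih h2
        _ = ⋃ ε : Fin d → Bool, halfOpenCube (childCorner p.1 p.2 ε) (p.2 / 2) := by
            ext x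
            simp only [Set.mem_iUnion]
            constructor
            · rintro ⟨a, ha, hx⟩
              obtain ⟨ε, rfl⟩ := mem_kids.1 ha
              exact ⟨ε, hx⟩
            · rintro ⟨ε, hx⟩
              exact ⟨_, mem_kids.2 ⟨ε, rfl⟩, hx⟩
        _ = halfOpenCube p.1 p.2 := iUnion_child p.1 hp

lemma list_sum_toList {A : Type*} (s : Finset A) (f : A → ℝ) :
    (s.toList.map f).sum = ∑ i ∈ s, f i := by
  rw [← Multiset.sum_coe, ← Multiset.map_coe, Finset.coe_toList]
  rfl

lemma sum_map_flatMap {A B : Type*} (h : A → List B) (F : B → ℝ) :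
    ∀ (l : List A), ((l.flatMap h).map F).sum = (l.map fun a => ((h a).map F).sum).sum
  | [] => by simp
  | a :: t => by
      simp [List.flatMap_cons, sum_map_flatMap h F t]

lemma sum_map_kids (p : EuclideanSpace ℝ (Fin d) × ℝ) (G : EuclideanSpace ℝ (Fin d) × ℝ → ℝ) :
    ((kids p).map G).sum = ∑ ε : Fin d → Bool, G (childCorner p.1 p.2 ε, p.2 / 2) := by
  rw [kids, List.map_map]
  exact list_sum_toList _ _

lemma sum_map_get {A : Type*} (l : List A) (F : A → ℝ) :
    ∑ i : Fin l.length, F (l.get i) = (l.map F).sum := by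
  induction l with
  | nil => simp
  | cons a t ih =>
    rw [show (∑ i : Fin (a :: t).length, F ((a :: t).get i))
        = ∑ i : Fin (t.length + 1), F ((a :: t).get i) from rfl,
      Fin.sum_univ_succ]
    simpa using ih

lemma sum_subdiv_kids (k : ℕ) (p : EuclideanSpace ℝ (Fin d) × ℝ)
    (F : EuclideanSpace ℝ (Fin d) × ℝ → ℝ) :
    (((kids p).flatMap (subdiv g Λ k)).map F).sum
      = ∑ ε : Fin d → Bool,
          ((subdiv g Λ k (childCorner p.1 p.2 ε, p.2 / 2)).map F).sum := by
  rw [sum_map_flatMap]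
  exact sum_map_kids p _

lemma key {α β : ℝ} (hg : Integrable g) (hg0 : ∀ x, 0 ≤ g x) (hΛ : 0 < Λ)
    (hd : 1 ≤ d) (hα : 0 < α) (hβ : 0 < β) {s₀ : ℝ}
    (Hδ : ∀ (c : EuclideanSpace ℝ (Fin d)) (ℓ : ℝ), 0 < ℓ → ℓ ≤ s₀ → mass g (c, ℓ) ≤ Λ)
    (k : ℕ) :
    ∀ {p : EuclideanSpace ℝ (Fin d) × ℝ}, 0 < p.2 → p.2 ≤ s₀ * 2 ^ k → Λ < mass g p →
    Λ ^ β * ((2:ℝ) ^ ((d:ℝ) * β))⁻¹ * (p.2 ^ d) ^ (-α) ≤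
      ((subdiv g Λ k p).map
        (fun q => (q.2 ^ d) ^ (-α) * (mass g q ^ β - Λ ^ β / Cst d α β))).sum := by
  induction k with
  | zero =>
    intro p hp hps hm
    exact absurd (Hδ _ _ hp (by simpa using hps)) (not_le.2 hm)
  | succ k ih =>
    intro p hp hps hm
    rw [subdiv_succ, if_neg (not_le.2 hm), sum_subdiv_kids]
    have hp2 : (0:ℝ) < p.2 / 2 := by linarith
    have hps2 : p.2 / 2 ≤ s₀ * 2 ^ k := by
      have h21 : (2:ℝ) ^ (k + 1) = 2 * 2 ^ k := by ring
      rw [h21] at hps; linarith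
    have hw : (0:ℝ) < (p.2 ^ d) ^ (-α) := Real.rpow_pos_of_pos (pow_pos hp d) _
    have hwc : ((p.2 / 2) ^ d) ^ (-α) = (2:ℝ) ^ ((d:ℝ) * α) * (p.2 ^ d) ^ (-α) := wchild hp
    have hwcpos : (0:ℝ) < ((p.2 / 2) ^ d) ^ (-α) := Real.rpow_pos_of_pos (pow_pos hp2 d) _
    have hC : 0 < Cst d α β := Cst_pos hd hα hβ
    have hΛβ : 0 < Λ ^ β := Real.rpow_pos_of_pos hΛ _
    have h2d : (0:ℝ) < 2 ^ (d : ℕ) := by positivity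
    have hmass_add : mass g p
        = ∑ ε : Fin d → Bool, mass g (childCorner p.1 p.2 ε, p.2 / 2) :=
      mass_eq_sum_kids g hg hp
    have hm0 : ∀ ε : Fin d → Bool, 0 ≤ mass g (childCorner p.1 p.2 ε, p.2 / 2) :=
      fun ε => mass_nonneg g hg0 _
    -- pigeonhole: a heavy child
    obtain ⟨ε₀, hε₀⟩ : ∃ ε : Fin d → Bool,
        mass g p ≤ 2 ^ (d : ℕ) * mass g (childCorner p.1 p.2 ε, p.2 / 2) := by
      by_contra hno
      push_neg at hno
      have hlt : ∑ ε : Fin d → Bool, mass g (childCorner p.1 p.2 ε, p.2 / 2)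
          < ∑ _ε : Fin d → Bool, mass g p / 2 ^ (d : ℕ) := by
        refine Finset.sum_lt_sum_of_nonempty Finset.univ_nonempty fun ε _ => ?_
        rw [lt_div_iff₀ h2d]
        have hh := hno ε
        linarith
      rw [Finset.sum_const, Finset.card_univ] at hlt
      have hcard : (Fintype.card (Fin d → Bool) : ℝ) = 2 ^ (d : ℕ) := by
        simp [Fintype.card_fun]
      rw [nsmul_eq_mul, hcard] at hlt
      have heq : (2:ℝ) ^ (d : ℕ) * (mass g p / 2 ^ (d : ℕ)) = mass g p := by
        field_simp
      rw [heq] at hlt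
      rw [← hmass_add] at hlt
      exact lt_irrefl _ hlt
    -- general lower bound for every child contribution
    have hgen : ∀ ε : Fin d → Bool,
        -(Λ ^ β / Cst d α β) * ((p.2 / 2) ^ d) ^ (-α) ≤
        ((subdiv g Λ k (childCorner p.1 p.2 ε, p.2 / 2)).map
          (fun q => (q.2 ^ d) ^ (-α) * (mass g q ^ β - Λ ^ β / Cst d α β))).sum := by
      intro ε
      by_cases hle : mass g (childCorner p.1 p.2 ε, p.2 / 2) ≤ Λ
      · rw [subdiv_of_le g Λ hle]
        simp only [List.map_cons, List.map_nil, List.sum_cons, List.sum_nil, add_zero]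
        have hmβ : 0 ≤ mass g (childCorner p.1 p.2 ε, p.2 / 2) ^ β :=
          Real.rpow_nonneg (hm0 ε) β
        nlinarith [hwcpos]
      · push_neg at hle
        have hih : Λ ^ β * ((2:ℝ) ^ ((d:ℝ) * β))⁻¹ * ((p.2 / 2) ^ d) ^ (-α) ≤
            ((subdiv g Λ k (childCorner p.1 p.2 ε, p.2 / 2)).map
              (fun q => (q.2 ^ d) ^ (-α) * (mass g q ^ β - Λ ^ β / Cst d α β))).sum :=
          ih hp2 hps2 hle
        refine le_trans ?_ hih
        have hpos : 0 ≤ Λ ^ β * ((2:ℝ) ^ ((d:ℝ) * β))⁻¹ * ((p.2 / 2) ^ d) ^ (-α) := by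
          positivity
        have hneg : -(Λ ^ β / Cst d α β) * ((p.2 / 2) ^ d) ^ (-α) ≤ 0 :=
          mul_nonpos_of_nonpos_of_nonneg (neg_nonpos.2 (div_nonneg hΛβ.le hC.le)) hwcpos.le
        linarith
    -- the heavy child contributes a lot
    have hspec : (Λ ^ β * ((2:ℝ) ^ ((d:ℝ) * β))⁻¹ - Λ ^ β / Cst d α β) *
          ((p.2 / 2) ^ d) ^ (-α) ≤
        ((subdiv g Λ k (childCorner p.1 p.2 ε₀, p.2 / 2)).map
          (fun q => (q.2 ^ d) ^ (-α) * (mass g q ^ β - Λ ^ β / Cst d α β))).sum := by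
      by_cases hle : mass g (childCorner p.1 p.2 ε₀, p.2 / 2) ≤ Λ
      · rw [subdiv_of_le g Λ hle]
        simp only [List.map_cons, List.map_nil, List.sum_cons, List.sum_nil, add_zero]
        have hm_lb : Λ / 2 ^ (d : ℕ) ≤ mass g (childCorner p.1 p.2 ε₀, p.2 / 2) := by
          rw [div_le_iff₀ h2d]
          nlinarith [hε₀, hm.le]
        have hmβ_lb : Λ ^ β * ((2:ℝ) ^ ((d:ℝ) * β))⁻¹ ≤
            mass g (childCorner p.1 p.2 ε₀, p.2 / 2) ^ β := by
          rw [← lam_div_pow hΛ]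
          exact Real.rpow_le_rpow (by positivity) hm_lb hβ.le
        nlinarith [hwcpos]
      · push_neg at hle
        have hih : Λ ^ β * ((2:ℝ) ^ ((d:ℝ) * β))⁻¹ * ((p.2 / 2) ^ d) ^ (-α) ≤
            ((subdiv g Λ k (childCorner p.1 p.2 ε₀, p.2 / 2)).map
              (fun q => (q.2 ^ d) ^ (-α) * (mass g q ^ β - Λ ^ β / Cst d α β))).sum :=
          ih hp2 hps2 hle
        refine le_trans ?_ hih
        have hY : 0 ≤ Λ ^ β / Cst d α β := div_nonneg hΛβ.le hC.le
        nlinarith [hwcpos]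
    -- sum over all children
    rw [← Finset.add_sum_erase _ _ (Finset.mem_univ ε₀)]
    have hsum_erase :
        ((Finset.univ.erase ε₀).card : ℝ) * (-(Λ ^ β / Cst d α β) * ((p.2 / 2) ^ d) ^ (-α)) ≤
        ∑ ε ∈ Finset.univ.erase ε₀,
          ((subdiv g Λ k (childCorner p.1 p.2 ε, p.2 / 2)).map
            (fun q => (q.2 ^ d) ^ (-α) * (mass g q ^ β - Λ ^ β / Cst d α β))).sum := by
      calc ((Finset.univ.erase ε₀).card : ℝ) *
            (-(Λ ^ β / Cst d α β) * ((p.2 / 2) ^ d) ^ (-α))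
          = ∑ _ε ∈ Finset.univ.erase ε₀,
              (-(Λ ^ β / Cst d α β) * ((p.2 / 2) ^ d) ^ (-α)) := by
            rw [Finset.sum_const, nsmul_eq_mul]
        _ ≤ _ := Finset.sum_le_sum fun ε _ => hgen ε
    have hcard_erase : ((Finset.univ.erase ε₀).card : ℝ) = 2 ^ (d : ℕ) - 1 := by
      rw [Finset.card_erase_of_mem (Finset.mem_univ _), Finset.card_univ]
      have : Fintype.card (Fin d → Bool) = 2 ^ d := by simp [Fintype.card_fun]
      rw [this, Nat.cast_sub (Nat.one_le_two_pow)]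
      push_cast
      ring
    rw [hcard_erase] at hsum_erase
    have hfinal : Λ ^ β * ((2:ℝ) ^ ((d:ℝ) * β))⁻¹ * (p.2 ^ d) ^ (-α)
        = (Λ ^ β * ((2:ℝ) ^ ((d:ℝ) * β))⁻¹ - Λ ^ β / Cst d α β) *
            ((p.2 / 2) ^ d) ^ (-α)
          + ((2:ℝ) ^ (d : ℕ) - 1) *
              (-(Λ ^ β / Cst d α β) * ((p.2 / 2) ^ d) ^ (-α)) := by
      rw [hwc]
      linear_combination (-(Λ ^ β * (p.2 ^ d) ^ (-α))) * Cst_identity hd hα hβ (d := d)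
    linarith [hspec, hsum_erase]

lemma Cst_ge_one {d : ℕ} (hd : 1 ≤ d) {α β : ℝ} (hα : 0 < α) (hβ : 0 < β) :
    1 ≤ Cst d α β := by
  have hA : 1 < (2:ℝ) ^ ((d:ℝ) * α) := one_lt_A hd hα
  have hB : 1 ≤ (2:ℝ) ^ ((d:ℝ) * β) := (one_lt_A hd hβ).le
  have hD : 1 ≤ (2:ℝ) ^ ((d:ℝ)) := Real.one_le_rpow one_le_two (by positivity)
  have hnum : (2:ℝ) ^ ((d:ℝ) * (α + β + 1)) =
      (2:ℝ) ^ ((d:ℝ) * α) * (2:ℝ) ^ ((d:ℝ) * β) * (2:ℝ) ^ ((d:ℝ)) := by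
    rw [mul_add, mul_add, mul_one, Real.rpow_add two_pos, Real.rpow_add two_pos]
  rw [Cst, hnum, le_div_iff₀ (by linarith)]
  have h1 : (2:ℝ) ^ ((d:ℝ) * α) ≤ (2:ℝ) ^ ((d:ℝ) * α) * (2:ℝ) ^ ((d:ℝ) * β) :=
    le_mul_of_one_le_right (by positivity) hB
  have h2 : (2:ℝ) ^ ((d:ℝ) * α) * (2:ℝ) ^ ((d:ℝ) * β) ≤
      (2:ℝ) ^ ((d:ℝ) * α) * (2:ℝ) ^ ((d:ℝ) * β) * (2:ℝ) ^ ((d:ℝ)) :=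
    le_mul_of_one_le_right (by positivity) hD
  linarith

end CL

open CL in
theorem covering_lemma' (d : ℕ) (hd : 1 ≤ d)
    (a : EuclideanSpace ℝ (Fin d)) (L : ℝ) (hL : 0 < L)
    (Λ : ℝ) (hΛ : 0 < Λ)
    (f : EuclideanSpace ℝ (Fin d) → ℝ)
    (hf0 : ∀ x, 0 ≤ f x)
    (hfint : IntegrableOn f (halfOpenCube a L))
    (hmass : Λ ≤ ∫ x in halfOpenCube a L, f x) :
    ∃ (n : ℕ) (c : Fin n → EuclideanSpace ℝ (Fin d)) (ℓ : Fin n → ℝ),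
      (∀ i, 0 < ℓ i) ∧
      (Set.univ.PairwiseDisjoint fun i : Fin n => halfOpenCube (c i) (ℓ i)) ∧
      (⋃ i : Fin n, halfOpenCube (c i) (ℓ i)) = halfOpenCube a L ∧
      (∀ i, (∫ x in halfOpenCube (c i) (ℓ i), f x) ≤ Λ) ∧
      (∀ α β γ : ℝ, 0 < α → 0 < β → 0 ≤ γ →
        0 ≤ ∑ i : Fin n, (ℓ i ^ d) ^ (-α) *
          ((∫ x in halfOpenCube (c i) (ℓ i), f x) ^ β -
            Λ ^ (β - γ) /
              ((2 : ℝ) ^ ((d : ℝ) * (α + β + 1)) / ((2 : ℝ) ^ ((d : ℝ) * α) - 1)) *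
            (∫ x in halfOpenCube (c i) (ℓ i), f x) ^ γ)) := by
  classical
  set Q : Set (EuclideanSpace ℝ (Fin d)) := halfOpenCube a L with hQ
  have hQmeas : MeasurableSet Q := measurableSet_cube a L
  set g : EuclideanSpace ℝ (Fin d) → ℝ := Q.indicator f with hgdef
  have hg : Integrable g := hfint.integrable_indicator hQmeas
  have hg0 : ∀ x, 0 ≤ g x := fun x => Set.indicator_nonneg (fun y _ => hf0 y) x
  have hgf : ∀ (S : Set (EuclideanSpace ℝ (Fin d))), MeasurableSet S → S ⊆ Q →
      (∫ x in S, g x) = ∫ x in S, f x := by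
    intro S hS hsub
    exact setIntegral_congr_fun hS fun x hx => Set.indicator_of_mem (hsub hx) f
  have hmassroot : mass g (a, L) = ∫ x in Q, f x := hgf Q hQmeas subset_rfl
  -- absolute continuity
  obtain ⟨δ, hδpos, hδ⟩ := (memLp_one_iff_integrable.2 hg).eLpNorm_indicator_le
    le_rfl (by norm_num) hΛ
  set s₀ : ℝ := min 1 δ with hs₀def
  have hs₀ : 0 < s₀ := lt_min one_pos hδpos
  have Hδ : ∀ (c : EuclideanSpace ℝ (Fin d)) (ℓ : ℝ), 0 < ℓ → ℓ ≤ s₀ →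
      mass g (c, ℓ) ≤ Λ := by
    intro c ℓ hℓ hℓs
    have hSmeas : MeasurableSet (halfOpenCube c ℓ) := measurableSet_cube c ℓ
    have hvle : volume (halfOpenCube c ℓ) ≤ ENNReal.ofReal δ := by
      rw [volume_cube c hℓ.le]
      refine ENNReal.ofReal_le_ofReal ?_
      have h1 : ℓ ≤ 1 := le_trans hℓs (min_le_left _ _)
      have h2 : ℓ ≤ δ := le_trans hℓs (min_le_right _ _)
      calc ℓ ^ d ≤ ℓ := pow_le_of_le_one hℓ.le h1 (by omega)
        _ ≤ δ := h2
    have hsn := hδ (halfOpenCube c ℓ) hSmeas hvle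
    have haesm : AEStronglyMeasurable ((halfOpenCube c ℓ).indicator g) volume :=
      hg.aestronglyMeasurable.indicator hSmeas
    have h2 : ‖∫ x in halfOpenCube c ℓ, g x‖ ≤
        (eLpNorm ((halfOpenCube c ℓ).indicator g) 1 volume).toReal := by
      rw [← integral_indicator hSmeas]
      calc ‖∫ x, (halfOpenCube c ℓ).indicator g x‖
          ≤ ∫ x, ‖(halfOpenCube c ℓ).indicator g x‖ := norm_integral_le_integral_norm _
        _ = (∫⁻ x, ‖(halfOpenCube c ℓ).indicator g x‖ₑ ∂volume).toReal :=
            integral_norm_eq_lintegral_enorm haesm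
        _ = (eLpNorm ((halfOpenCube c ℓ).indicator g) 1 volume).toReal := by
            rw [eLpNorm_one_eq_lintegral_enorm]
    have h3 : (eLpNorm ((halfOpenCube c ℓ).indicator g) 1 volume).toReal ≤ Λ := by
      have := ENNReal.toReal_mono (by simp) hsn
      rwa [ENNReal.toReal_ofReal hΛ.le] at this
    calc mass g (c, ℓ) ≤ ‖∫ x in halfOpenCube c ℓ, g x‖ := le_abs_self _
      _ ≤ _ := h2
      _ ≤ Λ := h3
  -- choose the fuel
  obtain ⟨K, hK⟩ : ∃ K : ℕ, L ≤ s₀ * 2 ^ K := by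
    obtain ⟨K, hK⟩ := pow_unbounded_of_one_lt (L / s₀) (one_lt_two (α := ℝ))
    exact ⟨K, by rw [div_lt_iff₀ hs₀] at hK; nlinarith⟩
  set leaves := subdiv g Λ K (a, L) with hleaves
  have hLpos : (0:ℝ) < (a, L).2 := hL
  -- basic properties of each leaf
  have hside : ∀ q ∈ leaves, 0 < q.2 ∧ halfOpenCube q.1 q.2 ⊆ Q :=
    fun q hq => subdiv_side g Λ K hq hLpos
  have hmem : ∀ i : Fin leaves.length, leaves.get i ∈ leaves :=
    fun i => List.get_mem leaves i
  have hmassle : ∀ q ∈ leaves, mass g q ≤ Λ :=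
    fun q hq => subdiv_mass_le g Λ Hδ K hq hLpos hK
  have hintf : ∀ q ∈ leaves, (∫ x in halfOpenCube q.1 q.2, f x) = mass g q :=
    fun q hq => (hgf _ (measurableSet_cube _ _) (hside q hq).2).symm
  refine ⟨leaves.length, fun i => (leaves.get i).1, fun i => (leaves.get i).2,
    ?_, ?_, ?_, ?_, ?_⟩
  · intro i
    exact (hside _ (hmem i)).1
  · have hpw := subdiv_pairwise g Λ K (p := (a, L)) hLpos
    rw [List.pairwise_iff_get] at hpw
    intro i _ j _ hij
    rcases lt_or_gt_of_ne hij with h | h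
    · exact hpw i j h
    · exact (hpw j i h).symm
  · have hun : (⋃ q ∈ leaves, halfOpenCube q.1 q.2) = halfOpenCube a L :=
      subdiv_iUnion g Λ K (p := (a, L)) hLpos
    rw [hQ, ← hun]
    ext x
    simp only [Set.mem_iUnion]
    constructor
    · rintro ⟨i, hx⟩
      exact ⟨leaves.get i, hmem i, hx⟩
    · rintro ⟨q, hq, hx⟩
      obtain ⟨i, rfl⟩ := List.mem_iff_get.1 hq
      exact ⟨i, hx⟩
  · intro i
    rw [hintf _ (hmem i)]
    exact hmassle _ (hmem i)
  · intro α β γ hα hβ hγ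
    have hC : 0 < Cst d α β := Cst_pos hd hα hβ
    have hC1 : 1 ≤ Cst d α β := Cst_ge_one hd hα hβ
    have hΛβ : 0 < Λ ^ β := Real.rpow_pos_of_pos hΛ _
    have step1 : ∀ i : Fin leaves.length,
        ((leaves.get i).2 ^ d) ^ (-α) *
          (mass g (leaves.get i) ^ β - Λ ^ β / Cst d α β) ≤
        ((leaves.get i).2 ^ d) ^ (-α) *
          ((∫ x in halfOpenCube (leaves.get i).1 (leaves.get i).2, f x) ^ β -
            Λ ^ (β - γ) / Cst d α β *
            (∫ x in halfOpenCube (leaves.get i).1 (leaves.get i).2, f x) ^ γ) := by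
      intro i
      rw [hintf _ (hmem i)]
      have hw : (0:ℝ) ≤ ((leaves.get i).2 ^ d) ^ (-α) :=
        (Real.rpow_pos_of_pos (pow_pos (hside _ (hmem i)).1 d) _).le
      have hm0 : 0 ≤ mass g (leaves.get i) := mass_nonneg g hg0 _
      have hmle : mass g (leaves.get i) ≤ Λ := hmassle _ (hmem i)
      have hγle : mass g (leaves.get i) ^ γ ≤ Λ ^ γ := Real.rpow_le_rpow hm0 hmle hγ
      have hexp : Λ ^ (β - γ) * Λ ^ γ = Λ ^ β := by
        rw [← Real.rpow_add hΛ]; ring_nf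
      have hkey : Λ ^ (β - γ) / Cst d α β * mass g (leaves.get i) ^ γ ≤
          Λ ^ β / Cst d α β := by
        rw [div_mul_eq_mul_div, div_le_div_iff_of_pos_right hC]
        calc Λ ^ (β - γ) * mass g (leaves.get i) ^ γ
            ≤ Λ ^ (β - γ) * Λ ^ γ :=
              mul_le_mul_of_nonneg_left hγle (Real.rpow_nonneg hΛ.le _)
          _ = Λ ^ β := hexp
      have hmβ : mass g (leaves.get i) ^ β = mass g (leaves.get i) ^ β := rfl
      nlinarith [hw, hkey]
    have step2 : (0:ℝ) ≤ ∑ i : Fin leaves.length,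
        ((leaves.get i).2 ^ d) ^ (-α) *
          (mass g (leaves.get i) ^ β - Λ ^ β / Cst d α β) := by
      rw [sum_map_get leaves
        (fun q => (q.2 ^ d) ^ (-α) * (mass g q ^ β - Λ ^ β / Cst d α β))]
      by_cases hroot : mass g (a, L) ≤ Λ
      · have hmeq : mass g (a, L) = Λ :=
          le_antisymm hroot (by rw [hmassroot]; exact hmass)
        rw [hleaves, subdiv_of_le g Λ hroot]
        simp only [List.map_cons, List.map_nil, List.sum_cons, List.sum_nil, add_zero]
        have hw : (0:ℝ) ≤ (((a, L).2 : ℝ) ^ d) ^ (-α) :=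
          (Real.rpow_pos_of_pos (pow_pos hL d) _).le
        have : Λ ^ β / Cst d α β ≤ Λ ^ β := div_le_self hΛβ.le hC1
        rw [hmeq]
        nlinarith
      · push_neg at hroot
        refine le_trans ?_ (key g Λ hg hg0 hΛ hd hα hβ Hδ K hLpos hK hroot)
        positivity
    have hCst_eq : Cst d α β =
        (2 : ℝ) ^ ((d : ℝ) * (α + β + 1)) / ((2 : ℝ) ^ ((d : ℝ) * α) - 1) := rfl
    rw [← hCst_eq]
    exact le_trans step2 (Finset.sum_le_sum fun i _ => step1 i)

/-- **Covering lemma**: given a cube `Q₀ ⊆ ℝ^d`, `Λ > 0` and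
`0 ≤ f ∈ L¹(Q₀)` with `∫_{Q₀} f ≥ Λ`, the cube `Q₀` can be partitioned into
finitely many disjoint sub-cubes `Q` with `∫_Q f ≤ Λ`, such that for all
`α, β > 0`, `γ ≥ 0`:
`∑_Q |Q|^{-α} [(∫_Q f)^β − (Λ^{β-γ}/C_{d,α,β})(∫_Q f)^γ] ≥ 0`,
where `C_{d,α,β} = 2^{d(α+β+1)}/(2^{dα}−1)`. -/
theorem covering_lemma (d : ℕ) (hd : 1 ≤ d)
    (a : EuclideanSpace ℝ (Fin d)) (L : ℝ) (hL : 0 < L)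
    (Λ : ℝ) (hΛ : 0 < Λ)
    (f : EuclideanSpace ℝ (Fin d) → ℝ)
    (hf0 : ∀ x, 0 ≤ f x)
    (hfint : IntegrableOn f (halfOpenCube a L))
    (hmass : Λ ≤ ∫ x in halfOpenCube a L, f x) :
    ∃ (n : ℕ) (c : Fin n → EuclideanSpace ℝ (Fin d)) (ℓ : Fin n → ℝ),
      (∀ i, 0 < ℓ i) ∧
      (Set.univ.PairwiseDisjoint fun i : Fin n => halfOpenCube (c i) (ℓ i)) ∧
      (⋃ i : Fin n, halfOpenCube (c i) (ℓ i)) = halfOpenCube a L ∧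
      (∀ i, (∫ x in halfOpenCube (c i) (ℓ i), f x) ≤ Λ) ∧
      (∀ α β γ : ℝ, 0 < α → 0 < β → 0 ≤ γ →
        0 ≤ ∑ i : Fin n, (ℓ i ^ d) ^ (-α) *
          ((∫ x in halfOpenCube (c i) (ℓ i), f x) ^ β -
            Λ ^ (β - γ) /
              ((2 : ℝ) ^ ((d : ℝ) * (α + β + 1)) / ((2 : ℝ) ^ ((d : ℝ) * α) - 1)) *
            (∫ x in halfOpenCube (c i) (ℓ i), f x) ^ γ)) := by
  exact covering_lemma' d hd a L hL Λ hΛ f hf0 hfint hmass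
end
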